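/- Let G be a finite, connected graph and let w ∈ Λ be an equilibrium. Set P = {i ∈ [m] : w_i > 0} and Z = {i ∈ [m] : w_i = 0}. Then w is non-unstable (i.e., no eigenvalue of JF(w) has strictly positive real part) if and only if (∂L/∂v_i)(w) ≤ 0 for every i ∈ Z and (∂L/∂v_i)(w) = 0 for every i ∈ P. -/

import Mathlib

open MeasureTheory Filter Finset Topology

noncomputable section

namespace GPU

variable {m : ℕ}

/-- The vector field `F` of the ODE associated to the generalized Pólya urn,
`F_i(x) = -x_i + (1/N) ∑_{j ~ i} x_i/(x_i+x_j)` where `N` is the number of edges. -/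
def polyaF (G : SimpleGraph (Fin m)) [DecidableRel G.Adj] (x : Fin m → ℝ) : Fin m → ℝ :=
  fun i => -x i + (1 / (G.edgeFinset.card : ℝ)) * ∑ j ∈ G.neighborFinset i, x i / (x i + x j)

/-- The domain `Δ`. -/
def simplexDelta (G : SimpleGraph (Fin m)) (c : ℝ) : Set (Fin m → ℝ) :=
  {x | (∀ i, 0 ≤ x i) ∧ ∑ i, x i = 1 ∧ ∀ i j, G.Adj i j → c ≤ x i + x j}

/-- The equilibria set `Λ = {x ∈ Δ : F(x) = 0}`. -/
def equilibria (G : SimpleGraph (Fin m)) [DecidableRel G.Adj] (c : ℝ) : Set (Fin m → ℝ) :=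
  {x | x ∈ simplexDelta G c ∧ polyaF G x = 0}

/-- The Lyapunov function `L(v) = -∑ v_i + (1/N) ∑_{{i,j} ∈ E} log (v_i + v_j)`. -/
def polyaL (G : SimpleGraph (Fin m)) [DecidableRel G.Adj] (v : Fin m → ℝ) : ℝ :=
  -∑ i, v i + (1 / (G.edgeFinset.card : ℝ)) *
    ∑ e ∈ G.edgeFinset,
      Sym2.lift ⟨fun i j => Real.log (v i + v j), fun i j => by simp [add_comm]⟩ e

/-- The partial derivative `∂L/∂v_i = -1 + (1/N) ∑_{j ~ i} 1/(v_i+v_j)`. -/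
def partialL (G : SimpleGraph (Fin m)) [DecidableRel G.Adj] (v : Fin m → ℝ) (i : Fin m) : ℝ :=
  -1 + (1 / (G.edgeFinset.card : ℝ)) * ∑ j ∈ G.neighborFinset i, 1 / (v i + v j)

/-- The Jacobian matrix `JF(v)` of `F` at `v`. -/
def polyaJacobian (G : SimpleGraph (Fin m)) [DecidableRel G.Adj] (v : Fin m → ℝ) :
    Matrix (Fin m) (Fin m) ℝ :=
  Matrix.of fun i j => fderiv ℝ (fun x => polyaF G x i) v (Pi.single j 1)

/-- A point is unstable if its Jacobian matrix has an eigenvalue with strictly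
positive real part. -/
def Unstable (G : SimpleGraph (Fin m)) [DecidableRel G.Adj] (v : Fin m → ℝ) : Prop :=
  ∃ z : ℂ, z ∈ spectrum ℂ ((polyaJacobian G v).map Complex.ofReal) ∧ 0 < z.re

/-- `G` is balanced-bipartite if it admits a bipartition `V = A ∪ Aᶜ` with `#A = #Aᶜ`. -/
def BalancedBipartite (G : SimpleGraph (Fin m)) : Prop :=
  ∃ A : Finset (Fin m), (∀ i j, G.Adj i j → (i ∈ A ↔ j ∉ A)) ∧ A.card = Aᶜ.card

/-- The generalized Pólya urn process on `G`: at each step, for each edge `{i,j}` one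
ball is added either to bin `i` or to bin `j`; conditionally on the past the ball goes
to `i` with probability `B_i(n)/(B_i(n)+B_j(n))` and the choices for distinct edges are
conditionally independent (encoded by the product form of `condLaw`). -/
structure PolyaUrn (G : SimpleGraph (Fin m)) [DecidableRel G.Adj]
    (Ω : Type) [mΩ : MeasurableSpace Ω] (μ : Measure Ω) where
  /-- initial number of balls in each bin -/
  B₀ : Fin m → ℕ
  B₀_pos : ∀ i, 1 ≤ B₀ i
  /-- the filtration of the process -/
  ℱ : Filtration ℕ mΩ
  /-- `δ (n+1) i j` is the indicator that the ball added on edge `{i,j}` at step `n+1`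
  goes to bin `i` -/
  δ : ℕ → Fin m → Fin m → Ω → ℕ
  /-- number of balls in each bin after step `n` -/
  B : ℕ → Ω → Fin m → ℕ
  B_init : ∀ ω i, B 0 ω i = B₀ i
  B_step : ∀ n ω i, B (n + 1) ω i = B n ω i + ∑ j ∈ G.neighborFinset i, δ (n + 1) i j ω
  δ_sum : ∀ n i j ω, G.Adj i j → δ (n + 1) i j ω + δ (n + 1) j i ω = 1
  B_meas : ∀ n i, Measurable[ℱ n] fun ω => B n ω i
  δ_meas : ∀ n i j, Measurable[ℱ (n + 1)] fun ω => δ (n + 1) i j ω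
  condLaw : ∀ n (s : Fin m → Fin m → ℕ),
    (μ[Set.indicator {ω | ∀ i j, G.Adj i j → i < j → δ (n + 1) i j ω = s i j}
        (fun _ => (1 : ℝ)) | ℱ n])
      =ᵐ[μ] fun ω => ∏ i, ∏ j ∈ (G.neighborFinset i).filter (fun j => i < j),
        (if s i j = 1 then (B n ω i : ℝ) / ((B n ω i : ℝ) + (B n ω j : ℝ))
         else if s i j = 0 then (B n ω j : ℝ) / ((B n ω i : ℝ) + (B n ω j : ℝ)) else 0)

/-- The proportion of balls in each bin, `x_i(n) = B_i(n)/(N₀ + nN)`. -/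
def PolyaUrn.x {G : SimpleGraph (Fin m)} [DecidableRel G.Adj] {Ω : Type}
    [mΩ : MeasurableSpace Ω] {μ : Measure Ω} (U : PolyaUrn G Ω μ) (n : ℕ) (ω : Ω) :
    Fin m → ℝ :=
  fun i => (U.B n ω i : ℝ) / ((∑ j, U.B₀ j + n * G.edgeFinset.card : ℕ) : ℝ)

end GPU

namespace GPU


/-- The projection as a continuous linear map on `Fin m → ℝ`. -/
def pr (k : Fin m) : (Fin m → ℝ) →L[ℝ] ℝ := ContinuousLinearMap.proj k

lemma pr_apply (k : Fin m) (x : Fin m → ℝ) : pr k x = x k := rfl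

lemma hasFDerivAt_pr (k : Fin m) (w : Fin m → ℝ) :
    HasFDerivAt (fun x : Fin m → ℝ => x k) (pr k) w := (pr k).hasFDerivAt

lemma polyaF_hasFDerivAt (G : SimpleGraph (Fin m)) [DecidableRel G.Adj]
    (w : Fin m → ℝ) (i : Fin m) (hne : ∀ j ∈ G.neighborFinset i, w i + w j ≠ 0) :
    HasFDerivAt (fun x => polyaF G x i)
      (-(pr i) + (1 / (G.edgeFinset.card : ℝ)) •
        ∑ j ∈ G.neighborFinset i,
          (w i • ((-((w i + w j) ^ 2)⁻¹) • (pr i + pr j)) + (w i + w j)⁻¹ • pr i)) w := by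
  have hterm : ∀ j ∈ G.neighborFinset i,
      HasFDerivAt (fun x : Fin m → ℝ => x i / (x i + x j))
        (w i • ((-((w i + w j) ^ 2)⁻¹) • (pr i + pr j)) + (w i + w j)⁻¹ • pr i) w := by
    intro j hj
    have hs := (hasFDerivAt_pr i w).add (hasFDerivAt_pr j w)
    have hinv := (hasDerivAt_inv (hne j hj)).comp_hasFDerivAt w hs
    have := (hasFDerivAt_pr i w).mul hinv
    simpa [div_eq_mul_inv, Function.comp_def, Pi.mul_def, Pi.add_def] using this
  have hsum := HasFDerivAt.fun_sum hterm
  have hmul := hsum.const_mul (1 / (G.edgeFinset.card : ℝ))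
  exact ((hasFDerivAt_pr i w).neg).add hmul

lemma polyaJacobian_apply (G : SimpleGraph (Fin m)) [DecidableRel G.Adj]
    (w : Fin m → ℝ) (i k : Fin m) (hne : ∀ j ∈ G.neighborFinset i, w i + w j ≠ 0) :
    polyaJacobian G w i k =
      -(if i = k then (1:ℝ) else 0) + (1 / (G.edgeFinset.card : ℝ)) *
        ∑ j ∈ G.neighborFinset i,
          ((if i = k then (1:ℝ) else 0) * w j - (if j = k then (1:ℝ) else 0) * w i)
            / (w i + w j) ^ 2 := by
  have h := (polyaF_hasFDerivAt G w i hne).fderiv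
  show fderiv ℝ (fun x => polyaF G x i) w (Pi.single k 1) = _
  rw [h]
  simp only [ContinuousLinearMap.add_apply, ContinuousLinearMap.neg_apply,
    ContinuousLinearMap.smul_apply, ContinuousLinearMap.sum_apply, pr_apply, Pi.single_apply,
    smul_eq_mul]
  congr 1
  refine congrArg _ (Finset.sum_congr rfl fun j hj => ?_)
  have hs := hne j hj
  have hji : j ≠ i := G.ne_of_adj (G.adj_symm ((SimpleGraph.mem_neighborFinset G i j).mp hj))
  by_cases hik : i = k <;> by_cases hjk : j = k
  · exact absurd (hjk.trans hik.symm) hji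
  · subst hik
    simp only [if_true, hjk, if_false, reduceIte]
    field_simp
    ring
  · subst hjk
    simp only [if_true, hik, if_false, reduceIte]
    field_simp
    ring
  · simp only [hik, hjk, if_false, reduceIte]
    simp

lemma polyaJacobian_diag (G : SimpleGraph (Fin m)) [DecidableRel G.Adj]
    (w : Fin m → ℝ) (i : Fin m) (hne : ∀ j ∈ G.neighborFinset i, w i + w j ≠ 0) :
    polyaJacobian G w i i =
      -1 + (1 / (G.edgeFinset.card : ℝ)) *
        ∑ j ∈ G.neighborFinset i, w j / (w i + w j) ^ 2 := by
  rw [polyaJacobian_apply G w i i hne]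
  simp only [if_pos rfl]
  congr 1
  refine congrArg _ (Finset.sum_congr rfl fun j hj => ?_)
  have hji : j ≠ i := G.ne_of_adj (G.adj_symm ((SimpleGraph.mem_neighborFinset G i j).mp hj))
  simp [hji]

lemma polyaJacobian_offdiag (G : SimpleGraph (Fin m)) [DecidableRel G.Adj]
    (w : Fin m → ℝ) (i k : Fin m) (hik : i ≠ k)
    (hne : ∀ j ∈ G.neighborFinset i, w i + w j ≠ 0) :
    polyaJacobian G w i k =
      if k ∈ G.neighborFinset i then
        -((1 / (G.edgeFinset.card : ℝ)) * (w i / (w i + w k) ^ 2)) else 0 := by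
  rw [polyaJacobian_apply G w i k hne]
  simp only [if_neg hik, zero_mul, neg_zero, zero_add, zero_sub]
  have h1 : ∀ j ∈ G.neighborFinset i,
      -((if j = k then (1:ℝ) else 0) * w i) / (w i + w j) ^ 2
        = if j = k then -(w i / (w i + w j) ^ 2) else 0 := by
    intro j _
    by_cases hjk : j = k <;> simp [hjk, neg_div]
  rw [Finset.sum_congr rfl h1, Finset.sum_ite_eq' (G.neighborFinset i) k
    (fun j => -(w i / (w i + w j) ^ 2))]
  by_cases hk : k ∈ G.neighborFinset i <;> simp [hk, mul_div_assoc]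

lemma polyaF_eq_mul_partialL (G : SimpleGraph (Fin m)) [DecidableRel G.Adj]
    (w : Fin m → ℝ) (i : Fin m) : polyaF G w i = w i * partialL G w i := by
  have h : ∑ j ∈ G.neighborFinset i, w i / (w i + w j)
      = w i * ∑ j ∈ G.neighborFinset i, 1 / (w i + w j) := by
    rw [Finset.mul_sum]
    exact Finset.sum_congr rfl fun j _ => (mul_one_div _ _).symm
  show -w i + (1 / (G.edgeFinset.card : ℝ)) * ∑ j ∈ G.neighborFinset i, w i / (w i + w j) = _
  rw [h, partialL]
  ring

lemma mem_spectrum_iff_eig {n : ℕ} (M : Matrix (Fin n) (Fin n) ℂ) (z : ℂ) :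
    z ∈ spectrum ℂ M ↔ Module.End.HasEigenvalue (Matrix.toLin' M) z := by
  rw [← AlgEquiv.spectrum_eq (Matrix.toLinAlgEquiv' : Matrix (Fin n) (Fin n) ℂ ≃ₐ[ℂ] _) M,
    ← Module.End.hasEigenvalue_iff_mem_spectrum]
  rfl

/-- An equilibrium `w ∈ Λ` is non-unstable (no Jacobian eigenvalue
with strictly positive real part) if and only if `∂L/∂v_i(w) ≤ 0` for every `i` in
`Z = {i : w_i = 0}` and `∂L/∂v_i(w) = 0` for every `i` in `P = {i : w_i > 0}`. -/
theorem non_unstable_iff_partialL_conditions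
    (m : ℕ) (G : SimpleGraph (Fin m)) [DecidableRel G.Adj] (hconn : G.Connected)
    (c : ℝ) (hc0 : 0 < c) (hc1 : c < 1 / (G.edgeFinset.card : ℝ))
    (w : Fin m → ℝ) (hw : w ∈ equilibria G c) :
    ¬ Unstable G w ↔
      ((∀ i : Fin m, w i = 0 → partialL G w i ≤ 0) ∧
       (∀ i : Fin m, 0 < w i → partialL G w i = 0)) := by
  classical
  set N : ℝ := (G.edgeFinset.card : ℝ) with hNdef
  have hNnn : 0 ≤ N := by positivity
  have hNne : N ≠ 0 := by
    intro h
    have h2 : (1 : ℝ) / N = 0 := by rw [h]; simp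
    rw [h2] at hc1
    linarith
  have hNpos : 0 < N := lt_of_le_of_ne hNnn (Ne.symm hNne)
  have hinvN : 0 < 1 / N := by positivity
  obtain ⟨⟨hwnn, hwsum, hwedge⟩, hF⟩ := hw
  have hadj : ∀ i j, G.Adj i j → w i + w j ≠ 0 := fun i j h =>
    ne_of_gt (lt_of_lt_of_le hc0 (hwedge i j h))
  have hne : ∀ i, ∀ j ∈ G.neighborFinset i, w i + w j ≠ 0 := fun i j hj =>
    hadj i j ((SimpleGraph.mem_neighborFinset G i j).mp hj)
  have hadjpos : ∀ i, ∀ j ∈ G.neighborFinset i, 0 < w i + w j := fun i j hj =>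
    lt_of_lt_of_le hc0 (hwedge i j ((SimpleGraph.mem_neighborFinset G i j).mp hj))
  have hP : ∀ i : Fin m, 0 < w i → partialL G w i = 0 := by
    intro i hi
    have h0 : polyaF G w i = 0 := by rw [hF]; rfl
    rw [polyaF_eq_mul_partialL] at h0
    rcases mul_eq_zero.mp h0 with h | h
    · exact absurd h (ne_of_gt hi)
    · exact h
  -- the diagonal entry of a zero row
  have hdiagZ : ∀ i : Fin m, w i = 0 → polyaJacobian G w i i = partialL G w i := by
    intro i hi
    rw [polyaJacobian_diag G w i (hne i), partialL]
    congr 1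
    refine congrArg _ (Finset.sum_congr rfl fun j hj => ?_)
    have hj0 : w i + w j ≠ 0 := hne i j hj
    rw [hi, zero_add] at hj0 ⊢
    rw [sq]
    field_simp
  have hoffZ : ∀ i : Fin m, w i = 0 → ∀ k, i ≠ k → polyaJacobian G w i k = 0 := by
    intro i hi k hik
    rw [polyaJacobian_offdiag G w i k hik (hne i), hi]
    simp
  constructor
  · intro hns
    refine ⟨?_, hP⟩
    intro i hi
    by_contra hpos
    push_neg at hpos
    apply hns
    refine ⟨(partialL G w i : ℂ), ?_, by simpa using hpos⟩
    rw [spectrum.mem_iff]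
    intro hunit
    rw [Matrix.isUnit_iff_isUnit_det] at hunit
    have hdet : (algebraMap ℂ (Matrix (Fin m) (Fin m) ℂ) (partialL G w i)
        - (polyaJacobian G w).map Complex.ofReal).det = 0 := by
      apply Matrix.det_eq_zero_of_row_eq_zero i
      intro j
      by_cases hij : i = j
      · subst hij
        simp [Matrix.sub_apply, Matrix.map_apply, Matrix.algebraMap_matrix_apply,
          hdiagZ i hi]
      · simp [Matrix.sub_apply, Matrix.map_apply, Matrix.algebraMap_matrix_apply,
          hij, hoffZ i hi j hij]
    rw [hdet] at hunit
    exact (by simp : ¬IsUnit (0 : ℂ)) hunit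
  · rintro ⟨hZ, _⟩ ⟨z, hz, hzre⟩
    have heig := (mem_spectrum_iff_eig ((polyaJacobian G w).map Complex.ofReal) z).mp hz
    obtain ⟨k, hk⟩ := eigenvalue_mem_ball heig
    rw [Metric.mem_closedBall, dist_eq_norm] at hk
    have hnorm : ∀ j, ‖((polyaJacobian G w).map Complex.ofReal) k j‖ = |polyaJacobian G w k j| := by
      intro j
      simp [Matrix.map_apply, Complex.norm_real]
    have hMkk : ((polyaJacobian G w).map Complex.ofReal) k k
        = ((polyaJacobian G w k k : ℝ) : ℂ) := rfl
    have hre : z.re ≤ polyaJacobian G w k k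
        + ∑ j ∈ Finset.univ.erase k, |polyaJacobian G w k j| := by
      have h1 : z.re - polyaJacobian G w k k ≤ ‖z - ((polyaJacobian G w k k : ℝ) : ℂ)‖ := by
        have := Complex.re_le_norm (z - ((polyaJacobian G w k k : ℝ) : ℂ))
        simpa using this
      have h2 := hk
      rw [hMkk] at h2
      have h3 : ∑ j ∈ Finset.univ.erase k, ‖((polyaJacobian G w).map Complex.ofReal) k j‖
          = ∑ j ∈ Finset.univ.erase k, |polyaJacobian G w k j| :=
        Finset.sum_congr rfl fun j _ => hnorm j
      rw [h3] at h2
      linarith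
    -- now bound the Gershgorin disc in the left half plane
    have hbound : polyaJacobian G w k k
        + ∑ j ∈ Finset.univ.erase k, |polyaJacobian G w k j| ≤ 0 := by
      rcases eq_or_lt_of_le (hwnn k) with hk0 | hkpos
      · -- w k = 0 : zero off-diagonal row, diagonal partialL ≤ 0
        have hk0 : w k = 0 := hk0.symm
        have hsum0 : ∑ j ∈ Finset.univ.erase k, |polyaJacobian G w k j| = 0 := by
          apply Finset.sum_eq_zero
          intro j hj
          have hjk : k ≠ j := fun h => (Finset.mem_erase.mp hj).1 h.symm
          rw [hoffZ k hk0 j hjk]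
          simp
        rw [hsum0, hdiagZ k hk0, add_zero]
        exact hZ k hk0
      · -- w k > 0
        have hplk := hP k hkpos
        have h1 : (1 : ℝ) = (1 / N) * ∑ j ∈ G.neighborFinset k, 1 / (w k + w j) := by
          have := hplk
          rw [partialL] at this
          linarith
        have hdiag : polyaJacobian G w k k
            = -((1 / N) * ∑ j ∈ G.neighborFinset k, w k / (w k + w j) ^ 2) := by
          rw [polyaJacobian_diag G w k (hne k)]
          have hsum : ∀ j ∈ G.neighborFinset k,
              w j / (w k + w j) ^ 2 = 1 / (w k + w j) - w k / (w k + w j) ^ 2 := by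
            intro j hj
            have hs := hne k j hj
            field_simp
            ring
          rw [Finset.sum_congr rfl hsum, Finset.sum_sub_distrib, mul_sub, ← h1]
          ring
        have hsub : G.neighborFinset k ⊆ Finset.univ.erase k := by
          intro j hj
          exact Finset.mem_erase.mpr ⟨G.ne_of_adj (G.adj_symm
            ((SimpleGraph.mem_neighborFinset G k j).mp hj)), Finset.mem_univ j⟩
        have hoff : ∑ j ∈ Finset.univ.erase k, |polyaJacobian G w k j|
            = (1 / N) * ∑ j ∈ G.neighborFinset k, w k / (w k + w j) ^ 2 := by
          have h2 : ∀ j ∈ Finset.univ.erase k, |polyaJacobian G w k j|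
              = if j ∈ G.neighborFinset k then (1 / N) * (w k / (w k + w j) ^ 2) else 0 := by
            intro j hj
            have hkj : k ≠ j := fun h => (Finset.mem_erase.mp hj).1 h.symm
            rw [polyaJacobian_offdiag G w k j hkj (hne k)]
            by_cases hmem : j ∈ G.neighborFinset k
            · rw [if_pos hmem, if_pos hmem, abs_neg, abs_of_nonneg]
              exact mul_nonneg (le_of_lt hinvN) (div_nonneg (hwnn k) (sq_nonneg _))
            · rw [if_neg hmem, if_neg hmem, abs_zero]
          rw [Finset.sum_congr rfl h2, Finset.sum_ite_mem,
            Finset.inter_eq_right.mpr hsub, Finset.mul_sum]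
        rw [hdiag, hoff, neg_add_cancel]
    linarith [hre, hbound, hzre]


end GPU
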